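/- arXiv:2008.10157 — 2 statements merged into one kernel-verified Lean document; each statement's English description precedes it below -/
import Mathlib

section
/- Under the Newton tracking primal–dual iteration, for every t ≥ 0 the iterates satisfy the identity ∇f(x^{t+1}) − ∇f(x*) + (I − 𝐖)^{1/2}(v^{t+1} − v*) + ε(x^{t+1} − x^t) + e^t = 0, where e^t := ∇f(x^t) − ∇f(x^{t+1}) + ∇²f(x^t)(x^{t+1} − x^t) − α(I − 𝐖)(x^{t+1} − x^t). -/
open Matrix Kronecker
open scoped InnerProductSpace

noncomputable section

/-- Local decision space `ℝ^p`. -/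
abbrev Ep (p : ℕ) : Type := EuclideanSpace ℝ (Fin p)

/-- Stacked space `ℝ^{np}`. -/
abbrev Vnp (n p : ℕ) : Type := EuclideanSpace ℝ (Fin n × Fin p)

/-- The `i`-th block `x_i ∈ ℝ^p` of a stacked vector `x ∈ ℝ^{np}`. -/
def blk {n p : ℕ} (x : Vnp n p) (i : Fin n) : Ep p := WithLp.toLp 2 (fun j => x (i, j))

/-- Aggregate objective `f(x) = ∑ i, f_i(x_i)`. -/
def aggF {n p : ℕ} (f : Fin n → Ep p → ℝ) (x : Vnp n p) : ℝ := ∑ i, f i (blk x i)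

/-- Stacked gradient `∇f(x) = [∇f_1(x_1); …; ∇f_n(x_n)]`. -/
def aggGrad {n p : ℕ} (g : Fin n → Ep p → Ep p) (x : Vnp n p) : Vnp n p :=
  WithLp.toLp 2 (fun ij : Fin n × Fin p => g ij.1 (blk x ij.1) ij.2)

/-- Block-diagonal Hessian `∇²f(x)` applied to `w`. -/
def aggHess {n p : ℕ} (h : Fin n → Ep p → (Ep p →L[ℝ] Ep p)) (x w : Vnp n p) : Vnp n p :=
  WithLp.toLp 2 (fun ij : Fin n × Fin p => h ij.1 (blk x ij.1) (blk w ij.1) ij.2)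

/-- `𝐖 = W ⊗ I_p`. -/
def bigW {n : ℕ} (p : ℕ) (W : Matrix (Fin n) (Fin n) ℝ) :
    Matrix (Fin n × Fin p) (Fin n × Fin p) ℝ :=
  W ⊗ₖ (1 : Matrix (Fin p) (Fin p) ℝ)

/-- `I − 𝐖`. -/
def IWmat {n : ℕ} (p : ℕ) (W : Matrix (Fin n) (Fin n) ℝ) :
    Matrix (Fin n × Fin p) (Fin n × Fin p) ℝ :=
  1 - bigW p W

section OldSqrt
open scoped ComplexOrder

/-- Square root of a positive semidefinite matrix, as defined in Mathlib (Dec 2024). -/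
def Matrix.PosSemidef.sqrt {𝕜 : Type*} [RCLike 𝕜] {m : Type*} [Fintype m] [DecidableEq m]
    {A : Matrix m m 𝕜} (hA : A.PosSemidef) : Matrix m m 𝕜 :=
  hA.1.eigenvectorUnitary.1 * diagonal ((↑) ∘ (√·) ∘ hA.1.eigenvalues) *
    (star hA.1.eigenvectorUnitary : Matrix m m 𝕜)

end OldSqrt

open scoped ComplexOrder in
theorem Matrix.PosSemidef.sqrt_mul_self_old {𝕜 : Type*} [RCLike 𝕜] {m : Type*} [Fintype m]
    [DecidableEq m] {A : Matrix m m 𝕜} (hA : A.PosSemidef) : hA.sqrt * hA.sqrt = A := by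
  unfold Matrix.PosSemidef.sqrt
  conv_rhs => rw [hA.1.spectral_theorem, Unitary.conjStarAlgAut_apply]
  have hU : (star hA.1.eigenvectorUnitary : Matrix m m 𝕜) * hA.1.eigenvectorUnitary.1 = 1 :=
    Unitary.coe_star_mul_self _
  rw [show ∀ a b c d e f : Matrix m m 𝕜, a * b * c * (d * e * f) = a * (b * (c * d) * e) * f by
    intros; simp only [mul_assoc], hU, mul_one, diagonal_mul_diagonal]
  congr 1
  congr 1
  congr 1
  funext i
  simp only [Function.comp_apply, ← RCLike.ofReal_mul, Real.mul_self_sqrt (hA.eigenvalues_nonneg i)]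

theorem newton_tracking_error_identity
    {n p : ℕ} (hn : 0 < n) (hp : 0 < p)
    (W : Matrix (Fin n) (Fin n) ℝ)
    (hWnonneg : ∀ i j, 0 ≤ W i j) (hWsymm : W.IsSymm)
    (hWstoch : W *ᵥ (fun _ => (1 : ℝ)) = fun _ => 1)
    (hWker : ∀ y : Fin n → ℝ, (1 - W) *ᵥ y = 0 ↔ ∃ c : ℝ, y = fun _ => c)
    (hpsd : (IWmat p W).PosSemidef)
    (f : Fin n → Ep p → ℝ) (g : Fin n → Ep p → Ep p)
    (h : Fin n → Ep p → (Ep p →L[ℝ] Ep p))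
    (μf Lf : ℝ) (hμpos : 0 < μf) (hμL : μf ≤ Lf)
    (hC2 : ∀ i, ContDiff ℝ 2 (f i))
    (hg : ∀ i z, HasGradientAt (f i) (g i z) z)
    (hh : ∀ i z, HasFDerivAt (g i) (h i z) z)
    (hlow : ∀ i z w, μf * ‖w‖ ^ 2 ≤ ⟪(h i z) w, w⟫_ℝ)
    (hup : ∀ i z w, ⟪(h i z) w, w⟫_ℝ ≤ Lf * ‖w‖ ^ 2)
    (α ε : ℝ) (hα : 0 < α) (hε : 0 < ε)
    (x v : ℕ → Vnp n p)
    (hprimal : ∀ t, aggHess h (x t) (x t - x (t + 1)) + ε • (x t - x (t + 1)) =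
      aggGrad g (x t) + Matrix.toEuclideanLin hpsd.sqrt (v t)
        + α • Matrix.toEuclideanLin (IWmat p W) (x t))
    (hdual : ∀ t, v (t + 1) = v t + α • Matrix.toEuclideanLin hpsd.sqrt (x (t + 1)))
    (xs vs : Vnp n p)
    (hK1 : aggGrad g xs + Matrix.toEuclideanLin hpsd.sqrt vs = 0)
    (hK2 : Matrix.toEuclideanLin hpsd.sqrt xs = 0) :
    ∀ t : ℕ,
      aggGrad g (x (t + 1)) - aggGrad g xs
        + Matrix.toEuclideanLin hpsd.sqrt (v (t + 1) - vs)
        + ε • (x (t + 1) - x t)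
        + (aggGrad g (x t) - aggGrad g (x (t + 1))
            + aggHess h (x t) (x (t + 1) - x t)
            - α • Matrix.toEuclideanLin (IWmat p W) (x (t + 1) - x t)) = 0 := by
  intro t
  set L := Matrix.toEuclideanLin hpsd.sqrt with hL
  set M := Matrix.toEuclideanLin (IWmat p W) with hM
  have hLL : ∀ y : Vnp n p, L (L y) = M y := by
    intro y
    simp only [hL, hM, Matrix.toEuclideanLin_apply, Equiv.apply_symm_apply, Matrix.mulVec_mulVec, hpsd.sqrt_mul_self_old]
  have h2 : L (v (t + 1)) = L (v t) + α • M (x (t + 1)) := by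
    rw [hdual t]
    simp only [map_add, _root_.map_smul, hLL]
  have hHlin : aggHess h (x t) (x (t + 1) - x t) = -(aggHess h (x t) (x t - x (t + 1))) := by
    ext ij
    have : blk (x (t+1) - x t) ij.1 = -(blk (x t - x (t+1)) ij.1) := by
      ext j
      simp [blk]
    show (h ij.1 (blk (x t) ij.1)) (blk (x (t+1) - x t) ij.1) ij.2 = _
    rw [this, map_neg]
    rfl
  have h1 := hprimal t
  have hK1' : L vs = -(aggGrad g xs) := by
    have := hK1
    rw [hL]
    linear_combination (norm := abel) hK1
  rw [map_sub, h2, hK1', hHlin, map_sub]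
  have h1' : aggHess h (x t) (x t - x (t + 1)) =
      aggGrad g (x t) + L (v t) + α • M (x t) - ε • (x t - x (t + 1)) := by
    linear_combination (norm := abel) h1
  rw [h1']
  module
end
end

section
/- Consider local sequences x_i^t, u_i^t ∈ ℝ^p (i = 1,…,n, t ≥ 0) satisfying the Newton tracking update (∇²f_i(x_i^{t+1}) + εI_p)·u_i^{t+1} = (∇²f_i(x_i^t) + εI_p)·u_i^t + ∇f_i(x_i^{t+1}) − ∇f_i(x_i^t) + 2α(x_i^{t+1} − ∑_{j} w_{ij} x_j^{t+1}) − α(x_i^t − ∑_{j} w_{ij} x_j^t). If the initialization satisfies ∑_{i=1}^n (∇²f_i(x_i^0) + εI_p)·u_i^0 = ∑_{i=1}^n ∇f_i(x_i^0), then for every t ≥ 0 it holds that ∑_{i=1}^n (∇²f_i(x_i^t) + εI_p)·u_i^t = ∑_{i=1}^n ∇f_i(x_i^t). -/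
open Matrix Kronecker
open scoped InnerProductSpace

noncomputable section

/-- If `∑ i (∇²f_i(x_i⁰)+εI)u_i⁰ = ∑ i ∇f_i(x_i⁰)`, then the Newton tracking update
preserves `∑ i (∇²f_i(x_i^t)+εI)u_i^t = ∑ i ∇f_i(x_i^t)` for all `t`. -/
theorem newton_tracking_direction_conservation
    {n p : ℕ} (hn : 0 < n) (hp : 0 < p)
    (W : Matrix (Fin n) (Fin n) ℝ)
    (hWnonneg : ∀ i j, 0 ≤ W i j) (hWsymm : W.IsSymm)
    (hWstoch : W *ᵥ (fun _ => (1 : ℝ)) = fun _ => 1)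
    (f : Fin n → Ep p → ℝ) (g : Fin n → Ep p → Ep p)
    (h : Fin n → Ep p → (Ep p →L[ℝ] Ep p))
    (hC2 : ∀ i, ContDiff ℝ 2 (f i))
    (hg : ∀ i z, HasGradientAt (f i) (g i z) z)
    (hh : ∀ i z, HasFDerivAt (g i) (h i z) z)
    (α ε : ℝ) (hα : 0 < α) (hε : 0 < ε)
    (xl u : ℕ → Fin n → Ep p)
    (hupd : ∀ t (i : Fin n),
      (h i (xl (t + 1) i)) (u (t + 1) i) + ε • u (t + 1) i =
        (h i (xl t i)) (u t i) + ε • u t i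
          + g i (xl (t + 1) i) - g i (xl t i)
          + (2 * α) • (xl (t + 1) i - ∑ j, W i j • xl (t + 1) j)
          - α • (xl t i - ∑ j, W i j • xl t j))
    (hinit : ∑ i, ((h i (xl 0 i)) (u 0 i) + ε • u 0 i) = ∑ i, g i (xl 0 i)) :
    ∀ t, ∑ i, ((h i (xl t i)) (u t i) + ε • u t i) = ∑ i, g i (xl t i) := by
  have hcol : ∀ j : Fin n, ∑ i, W i j = 1 := by
    intro j
    have := congrFun hWstoch j
    simp only [Matrix.mulVec, dotProduct, mul_one] at this
    calc ∑ i, W i j = ∑ i, W j i := by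
          refine Finset.sum_congr rfl fun i _ => ?_
          exact (congrFun (congrFun hWsymm j) i).symm ▸ rfl
      _ = 1 := this
  have hzero : ∀ x : Fin n → Ep p, ∑ i, (x i - ∑ j, W i j • x j) = 0 := by
    intro x
    rw [Finset.sum_sub_distrib, Finset.sum_comm]
    have : ∀ j : Fin n, ∑ i, W i j • x j = x j := by
      intro j
      rw [← Finset.sum_smul, hcol j, one_smul]
    simp only [this, sub_self]
  intro t
  induction t with
  | zero => exact hinit
  | succ t ih =>
    have : ∑ i, ((h i (xl (t + 1) i)) (u (t + 1) i) + ε • u (t + 1) i) =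
        ∑ i, ((h i (xl t i)) (u t i) + ε • u t i
          + g i (xl (t + 1) i) - g i (xl t i)
          + (2 * α) • (xl (t + 1) i - ∑ j, W i j • xl (t + 1) j)
          - α • (xl t i - ∑ j, W i j • xl t j)) :=
      Finset.sum_congr rfl fun i _ => hupd t i
    rw [this]
    simp only [Finset.sum_sub_distrib, Finset.sum_add_distrib, ← Finset.smul_sum,
      hzero, smul_zero, add_zero, sub_zero]
    rw [Finset.sum_add_distrib, ← Finset.smul_sum] at ih
    rw [ih]
    abel
end
end
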